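/- Let G = G₁ *_H G₂ with a ∈ G₂ \ H satisfying HaH ≠ Ha⁻¹H and b ∈ G₁ \ H. Define g_n = baba⁻¹ba(ba⁻¹)²ba⋯(ba⁻¹)^{n−1}ba(ba⁻¹)^n ba. Then f(g_n) ≥ n − 1, so f is unbounded on G. -/

import Mathlib

open scoped Pointwise

/-- `x` and `y` lie in different factors. -/
def InDiffFactors {G : Type*} [Group G] (G₁ G₂ : Subgroup G) (x y : G) : Prop :=
  ¬(x ∈ G₁ ∧ y ∈ G₁) ∧ ¬(x ∈ G₂ ∧ y ∈ G₂)

/-- A reduced word in an (internal) amalgamated free product of `G₁` and `G₂` over `H`. -/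
def ReducedWord' {G : Type*} [Group G] (G₁ G₂ H : Subgroup G) (w : List G) : Prop :=
  (∀ x ∈ w, x ∈ (G₁ : Set G) ∪ (G₂ : Set G)) ∧
  w.Chain' (InDiffFactors G₁ G₂) ∧
  (1 < w.length → ∀ x ∈ w, x ∉ H) ∧
  (w.length = 1 → (1 : G) ∉ w)

/-- `G` is the (internal) amalgamated free product `G₁ *_H G₂`: `H = G₁ ⊓ G₂`,
the factors generate, and nonempty reduced words have nontrivial product. -/
def IsAmalgam {G : Type*} [Group G] (G₁ G₂ H : Subgroup G) : Prop :=
  H = G₁ ⊓ G₂ ∧ Subgroup.closure ((G₁ : Set G) ∪ (G₂ : Set G)) = ⊤ ∧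
  ∀ w : List G, ReducedWord' G₁ G₂ H w → w ≠ [] → w.prod ≠ 1

/-- The double coset `H a H`. -/
def DCoset {G : Type*} [Group G] (H : Subgroup G) (a : G) : Set G :=
  (H : Set G) * {a} * (H : Set G)

/-- There is an `a`-segment of length `2k-1` starting at position `j` of the word `w`:
a subword `a x₁ ⋯ x_{2k-1} a` with no `x_i = a`. -/
def IsSegAt {G : Type*} [Group G] (a : G) (w : List G) (k j : ℕ) : Prop :=
  1 ≤ k ∧ w[j]? = some a ∧ w[j + 2 * k]? = some a ∧
    ∀ i, 0 < i → i < 2 * k → w[j + i]? ≠ some a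

/-- `pk a w k` = number of `a`-segments of length `2k-1` in `w`. -/
noncomputable def pk {G : Type*} [Group G] (a : G) (w : List G) (k : ℕ) : ℕ :=
  Set.ncard {j : ℕ | IsSegAt a w k j}

/-- `mk' a w k` = number of `a⁻¹`-segments of length `2k-1` in `w`. -/
noncomputable def mk' {G : Type*} [Group G] (a : G) (w : List G) (k : ℕ) : ℕ :=
  pk a⁻¹ w k

noncomputable def dk {G : Type*} [Group G] (a : G) (w : List G) (k : ℕ) : ℤ :=
  (pk a w k : ℤ) - (mk' a w k : ℤ)

/-- `rk` is the parity of `dk`. -/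
noncomputable def rk {G : Type*} [Group G] (a : G) (w : List G) (k : ℕ) : ℕ :=
  (dk a w k).natAbs % 2

/-- The segment-counting function `f(w) = Σ_k r_k(w)` (all segments have length
at most the length of `w`, so the sum below is the full sum). -/
noncomputable def segf {G : Type*} [Group G] (a : G) (w : List G) : ℕ :=
  ∑ k ∈ Finset.Icc 1 w.length, rk a w k

/-- Data describing the passage from a reduced word `x` to a special form: each
syllable of the form `u * a^θ * v` with `u v ∈ H` (marked `rep i = true`) is replaced
by `a^θ`, with `u`, `v` absorbed into the neighbouring syllables. -/
structure SpecialData {G : Type*} [Group G] (H : Subgroup G) (a : G) (x : List G) where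
  rep : ℕ → Bool
  u : ℕ → G
  v : ℕ → G
  θ : ℕ → ℤ
  hu : ∀ i, u i ∈ H
  hv : ∀ i, v i ∈ H
  hθ : ∀ i, θ i = 1 ∨ θ i = -1
  hrep : ∀ (i : ℕ) (hi : i < x.length), rep i = true → x.get ⟨i, hi⟩ = u i * a ^ θ i * v i
  hnotrep : ∀ i, rep i = false → u i = 1 ∧ v i = 1
  hforced : ∀ (i : ℕ) (hi : i < x.length),
    (∃ u' ∈ H, ∃ v' ∈ H, ∃ θ' : ℤ, (θ' = 1 ∨ θ' = -1) ∧ x.get ⟨i, hi⟩ = u' * a ^ θ' * v') →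
    rep i = true

/-- The special form produced from the reduced word `x` by the data `d`. -/
def SpecialData.word {G : Type*} [Group G] {H : Subgroup G} {a : G} {x : List G}
    (d : SpecialData H a x) : List G :=
  (if x.length ≠ 0 ∧ d.rep 0 = true then [d.u 0] else []) ++
  (List.ofFn fun i : Fin x.length =>
    if d.rep (i : ℕ) = true then a ^ d.θ (i : ℕ)
    else (if (i : ℕ) = 0 then 1 else d.v ((i : ℕ) - 1)) * x.get i *
      (if (i : ℕ) + 1 < x.length then d.u ((i : ℕ) + 1) else 1)) ++
  (if x.length ≠ 0 ∧ d.rep (x.length - 1) = true then [d.v (x.length - 1)] else [])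

/-- `w` is a special form of `g`. -/
def IsSpecialForm {G : Type*} [Group G] (G₁ G₂ H : Subgroup G) (a g : G) (w : List G) : Prop :=
  ∃ (x : List G) (d : SpecialData H a x),
    ReducedWord' G₁ G₂ H x ∧ x.prod = g ∧ w = d.word

/-- The word `g_n = b a b a⁻¹ b a (b a⁻¹)² b a ⋯ (b a⁻¹)ⁿ b a` (as a list of syllables). -/
def gword {G : Type*} [Group G] (a b : G) (n : ℕ) : List G :=
  [b, a] ++ ((List.range n).map fun j => (List.replicate (j + 1) [b, a⁻¹]).flatten ++ [b, a]).flatten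


/-! ### Auxiliary material -/

section SegfAux

/-- `gq m = m^2 + 3m + 1` is the position of the `(m+1)`-st occurrence of `a` in `gword`. -/
def gq (m : ℕ) : ℕ := m * m + 3 * m + 1

lemma gq_mono {m m' : ℕ} (h : m ≤ m') : gq m ≤ gq m' := by
  unfold gq; nlinarith

lemma gq_succ (m : ℕ) : gq (m + 1) = gq m + 2 * m + 4 := by unfold gq; ring

lemma gq_strict {m m' : ℕ} (h : m < m') : gq m + 2 * m + 4 ≤ gq m' := by
  have h2 := gq_mono (Nat.succ_le_of_lt h)
  rw [gq_succ] at h2; omega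

lemma gq_lt_reflect {m m' : ℕ} (h : gq m < gq m') : m < m' := by
  by_contra hc
  exact absurd (gq_mono (not_lt.1 hc)) (by omega)

lemma gq_odd (m : ℕ) : gq m % 2 = 1 := by
  induction m with
  | zero => rfl
  | succ m ih => rw [gq_succ]; omega

lemma L_eq_gq (n : ℕ) : (n + 1) * (n + 2) = gq n + 1 := by unfold gq; ring

lemma L_even (n : ℕ) : (n + 1) * (n + 2) % 2 = 0 :=
  Nat.even_iff.mp (Nat.even_mul_succ_self (n + 1))

lemma two_le_L (n : ℕ) : 2 ≤ (n + 1) * (n + 2) := by nlinarith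

lemma n_le_L (n : ℕ) : n + 1 ≤ (n + 1) * (n + 2) := by nlinarith

open Classical in
/-- the letter of `gword a b n` at position `i` (independent of `n`). -/
noncomputable def gletter {G : Type*} [Group G] (a b : G) (i : ℕ) : G :=
  if ∃ m, i = gq m then a else if i % 2 = 1 then a⁻¹ else b

variable {G : Type*} [Group G]

lemma gletter_of_gq (a b : G) (m : ℕ) : gletter a b (gq m) = a := by
  unfold gletter
  rw [if_pos ⟨m, rfl⟩]

lemma gletter_even (a b : G) {i : ℕ} (h : i % 2 = 0) : gletter a b i = b := by
  unfold gletter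
  rw [if_neg, if_neg]
  · omega
  · rintro ⟨m, rfl⟩
    have := gq_odd m; omega

lemma gletter_odd (a b : G) {i : ℕ} (hg : ¬∃ m, i = gq m) (h : i % 2 = 1) :
    gletter a b i = a⁻¹ := by
  unfold gletter
  rw [if_neg hg, if_pos h]

lemma replicate_flatten_length (b c : G) (k : ℕ) :
    ((List.replicate k [b, c]).flatten).length = 2 * k := by
  simp [List.length_flatten, List.map_replicate, List.sum_replicate]; omega

lemma replicate_flatten_getElem? (b c : G) (k r : ℕ) (h : r < 2 * k) :
    ((List.replicate k [b, c]).flatten)[r]? = some (if r % 2 = 0 then b else c) := by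
  induction k generalizing r with
  | zero => omega
  | succ k ih =>
    rw [List.replicate_succ, List.flatten_cons]
    match r with
    | 0 => simp
    | 1 => simp
    | (r + 2) =>
      rw [List.getElem?_append_right (by simp : ([b, c] : List G).length ≤ r + 2)]
      have h1 : r + 2 - ([b, c] : List G).length = r := by simp
      rw [h1, ih r (by omega)]
      have h2 : (r + 2) % 2 = r % 2 := by omega
      rw [h2]

lemma gword_succ (a b : G) (n : ℕ) :
    gword a b (n + 1) =
      gword a b n ++ ((List.replicate (n + 1) [b, a⁻¹]).flatten ++ [b, a]) := by
  unfold gword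
  rw [List.range_succ, List.map_append, List.flatten_append]
  simp [List.append_assoc]

lemma gword_length (a b : G) (n : ℕ) : (gword a b n).length = (n + 1) * (n + 2) := by
  induction n with
  | zero => rfl
  | succ n ih =>
    rw [gword_succ]
    simp only [List.length_append, ih, replicate_flatten_length]
    have : (n + 1 + 1) * (n + 1 + 2) = (n + 1) * (n + 2) + (2 * (n + 1) + 2) := by ring
    simp [this]

lemma gword_getElem? (a b : G) (n : ℕ) : ∀ i : ℕ, i < (n + 1) * (n + 2) →
    (gword a b n)[i]? = some (gletter a b i) := by
  induction n with
  | zero =>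
    intro i hi
    interval_cases i
    · rw [gletter_even a b (by omega)]; rfl
    · rw [show (1 : ℕ) = gq 0 from rfl, gletter_of_gq]; rfl
  | succ n ih =>
    intro i hi
    rw [gword_succ]
    by_cases h : i < (n + 1) * (n + 2)
    · rw [List.getElem?_append_left (by rw [gword_length]; exact h), ih i h]
    · push_neg at h
      rw [List.getElem?_append_right (by rw [gword_length]; exact h), gword_length]
      have hsplit : (n + 1 + 1) * (n + 1 + 2) = (n + 1) * (n + 2) + (2 * (n + 1) + 2) := by
        ring
      have hrb : i - (n + 1) * (n + 2) < 2 * (n + 1) + 2 := by omega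
      by_cases hr2 : i - (n + 1) * (n + 2) < 2 * (n + 1)
      · rw [List.getElem?_append_left (by rw [replicate_flatten_length]; exact hr2),
          replicate_flatten_getElem? b a⁻¹ (n + 1) _ hr2]
        have hEv := L_even n
        have hgq := L_eq_gq n
        have hgs := gq_succ n
        have hnotgq : ¬∃ m, i = gq m := by
          rintro ⟨m, rfl⟩
          have hml : n < m := gq_lt_reflect (by omega)
          have := gq_strict hml
          omega
        by_cases hro : (i - (n + 1) * (n + 2)) % 2 = 0
        · rw [if_pos hro, gletter_even a b (by omega)]
        · rw [if_neg hro, gletter_odd a b hnotgq (by omega)]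
      · rw [List.getElem?_append_right (by rw [replicate_flatten_length]; omega),
          replicate_flatten_length]
        have hEv := L_even n
        have hgq := L_eq_gq n
        have hgs := gq_succ n
        rcases (by omega : i - (n + 1) * (n + 2) - 2 * (n + 1) = 0 ∨
            i - (n + 1) * (n + 2) - 2 * (n + 1) = 1) with h' | h'
        · rw [h', gletter_even a b (by omega)]; rfl
        · rw [h', show i = gq (n + 1) from by omega, gletter_of_gq]; rfl

/-- The main counting lemma: any word whose letters follow the `gword` pattern has
`segf ≥ n - 1`. -/
lemma main_count (a : G) (w : List G) (n : ℕ)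
    (H1 : ∀ i : ℕ, w[i]? = some a ↔ ∃ m, m ≤ n ∧ i = gq m)
    (H2 : ∀ i : ℕ, w[i]? = some a⁻¹ → i % 2 = 1 ∧ i < (n + 1) * (n + 2))
    (H3 : ∀ i : ℕ, i % 2 = 1 → i < (n + 1) * (n + 2) →
      w[i]? = some a ∨ w[i]? = some a⁻¹)
    (hlen : n + 1 ≤ w.length) :
    n - 1 ≤ segf a w := by
  rcases Nat.lt_or_ge n 2 with hn | hn
  · have h0 : n - 1 = 0 := by omega
    rw [h0]; exact Nat.zero_le _
  have key : ∀ k ∈ Finset.Icc 3 (n + 1), rk a w k = 1 := by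
    intro k hk
    simp only [Finset.mem_Icc] at hk
    have hpset : {j : ℕ | IsSegAt a w k j} = {gq (k - 2)} := by
      ext j
      simp only [Set.mem_setOf_eq, Set.mem_singleton_iff]
      constructor
      · rintro ⟨hk1, hja, hj2k, hmid⟩
        obtain ⟨m, hmn, rfl⟩ := (H1 j).1 hja
        obtain ⟨m', hm'n, he'⟩ := (H1 _).1 hj2k
        have hmm' : m < m' := gq_lt_reflect (by omega)
        by_cases hcase : m' = m + 1
        · subst hcase
          have h2 := gq_succ m
          rw [show k - 2 = m from by omega]
        · exfalso
          have hm1 : m + 1 < m' := by omega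
          have h5 := gq_strict hm1
          have h2 := gq_succ m
          refine hmid (gq (m + 1) - gq m) (by omega) (by omega) ?_
          rw [show gq m + (gq (m + 1) - gq m) = gq (m + 1) from by omega]
          exact (H1 _).2 ⟨m + 1, by omega, rfl⟩
      · rintro rfl
        have hk2 : k = (k - 2) + 2 := by omega
        have h2 := gq_succ (k - 2)
        refine ⟨by omega, (H1 _).2 ⟨k - 2, by omega, rfl⟩, ?_, ?_⟩
        · rw [show gq (k - 2) + 2 * k = gq (k - 2 + 1) from by omega]
          exact (H1 _).2 ⟨k - 2 + 1, by omega, rfl⟩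
        · intro i hi0 hi2 hia
          obtain ⟨m'', hm''n, he⟩ := (H1 _).1 hia
          have hlt : k - 2 < m'' := gq_lt_reflect (by omega)
          have hlt2 : m'' < k - 2 + 1 := gq_lt_reflect (by omega)
          omega
    have hpk : pk a w k = 1 := by rw [pk, hpset, Set.ncard_singleton]
    have hmset : {j : ℕ | IsSegAt a⁻¹ w k j} = ∅ := by
      ext j
      simp only [Set.mem_setOf_eq, Set.mem_empty_iff_false, iff_false]
      rintro ⟨hk1, hj, hj2k, hmid⟩
      obtain ⟨hodd, hjL⟩ := H2 j hj
      obtain ⟨-, hj2kL⟩ := H2 _ hj2k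
      have h2 : w[j + 2]? = some a ∨ w[j + 2]? = some a⁻¹ :=
        H3 (j + 2) (by omega) (by omega)
      have h4 : w[j + 4]? = some a ∨ w[j + 4]? = some a⁻¹ :=
        H3 (j + 4) (by omega) (by omega)
      rcases h2 with h2 | h2
      · rcases h4 with h4 | h4
        · obtain ⟨m₁, -, e₁⟩ := (H1 _).1 h2
          obtain ⟨m₂, -, e₂⟩ := (H1 _).1 h4
          have hlt : m₁ < m₂ := gq_lt_reflect (by omega)
          have := gq_strict hlt
          omega
        · exact hmid 4 (by omega) (by omega) h4
      · exact hmid 2 (by omega) (by omega) h2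
    have hmk : mk' a w k = 0 := by rw [mk', pk, hmset, Set.ncard_empty]
    rw [rk, dk, hpk, hmk]
    norm_num
  calc n - 1 = ∑ _k ∈ Finset.Icc 3 (n + 1), 1 := by
        rw [Finset.sum_const, Nat.card_Icc, smul_eq_mul, mul_one]; omega
    _ = ∑ k ∈ Finset.Icc 3 (n + 1), rk a w k :=
        Finset.sum_congr rfl fun k hk => (key k hk).symm
    _ ≤ ∑ k ∈ Finset.Icc 1 w.length, rk a w k :=
        Finset.sum_le_sum_of_subset (by
          intro k hk
          simp only [Finset.mem_Icc] at *
          omega)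
    _ = segf a w := rfl

lemma letters_pack (a b : G) (n : ℕ) (w : List G)
    (hlen : n + 1 ≤ w.length)
    (hw : ∀ i, i < (n + 1) * (n + 2) → w[i]? = some (gletter a b i))
    (hw' : ∀ i, (n + 1) * (n + 2) ≤ i → w[i]? ≠ some a ∧ w[i]? ≠ some a⁻¹)
    (hab : a ≠ b) (hainvb : a⁻¹ ≠ b) (haa : a ≠ a⁻¹) :
    n - 1 ≤ segf a w := by
  have hL := L_eq_gq n
  apply main_count a w n _ _ _ hlen
  · intro i
    constructor
    · intro h
      by_cases hi : i < (n + 1) * (n + 2)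
      · rw [hw i hi] at h
        replace h := Option.some.inj h
        by_cases hg2 : ∃ m, i = gq m
        · obtain ⟨m, rfl⟩ := hg2
          refine ⟨m, ?_, rfl⟩
          by_contra hc
          have := gq_strict (show n < m by omega)
          omega
        · exfalso
          by_cases ho : i % 2 = 1
          · rw [gletter_odd a b hg2 ho] at h; exact haa h.symm
          · rw [gletter_even a b (by omega)] at h; exact hab h.symm
      · exact absurd h (hw' i (by omega)).1
    · rintro ⟨m, hm, rfl⟩
      have hilt : gq m < (n + 1) * (n + 2) := by have := gq_mono hm; omega
      rw [hw _ hilt, gletter_of_gq]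
  · intro i h
    by_cases hi : i < (n + 1) * (n + 2)
    · rw [hw i hi] at h
      replace h := Option.some.inj h
      refine ⟨?_, hi⟩
      by_cases hg2 : ∃ m, i = gq m
      · obtain ⟨m, rfl⟩ := hg2
        rw [gletter_of_gq] at h
        exact absurd h haa
      · by_cases ho : i % 2 = 1
        · exact ho
        · rw [gletter_even a b (by omega)] at h
          exact absurd h.symm hainvb
    · exact absurd h (hw' i (by omega)).2
  · intro i ho hi
    by_cases hg2 : ∃ m, i = gq m
    · obtain ⟨m, rfl⟩ := hg2
      left; rw [hw _ hi, gletter_of_gq]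
    · right; rw [hw i hi, gletter_odd a b hg2 ho]

end SegfAux

/-- For `g_n = b a b a⁻¹ b a (b a⁻¹)² ⋯ (b a⁻¹)ⁿ b a` one has `f (g_n) ≥ n - 1`; hence
`f` is unbounded on `G`. -/
theorem segf_gn_unbounded {G : Type*} [Group G] (G₁ G₂ H : Subgroup G) (a b : G)
    (ham : IsAmalgam G₁ G₂ H)
    (haG : a ∈ G₂) (haH : a ∉ H) (hd : DCoset H a ≠ DCoset H a⁻¹)
    (hbG : b ∈ G₁) (hbH : b ∉ H) :
    (∀ n : ℕ, n - 1 ≤ segf a (gword a b n)) ∧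
    ∀ N : ℕ, ∃ (g : G) (w : List G), IsSpecialForm G₁ G₂ H a g w ∧ N ≤ segf a w := by
  classical
  obtain ⟨hHeq, -, -⟩ := ham
  have hHle1 : H ≤ G₁ := hHeq ▸ inf_le_left
  have haG1 : a ∉ G₁ := fun h => haH (by rw [hHeq]; exact Subgroup.mem_inf.mpr ⟨h, haG⟩)
  have hainvG1 : a⁻¹ ∉ G₁ := fun h => haG1 (by simpa using inv_mem h)
  have hbG2 : b ∉ G₂ := fun h => hbH (by rw [hHeq]; exact Subgroup.mem_inf.mpr ⟨hbG, h⟩)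
  have ha1 : a ≠ 1 := fun h => haH (h ▸ one_mem H)
  have hainvH : a⁻¹ ∉ H := fun h => haH (by simpa using inv_mem h)
  have hainv1 : a⁻¹ ≠ 1 := fun h => hainvH (h ▸ one_mem H)
  have hab : a ≠ b := fun h => haG1 (h ▸ hbG)
  have hainvb : a⁻¹ ≠ b := fun h => hainvG1 (h ▸ hbG)
  have haa : a ≠ a⁻¹ := fun h => hd (by rw [← h])
  constructor
  · -- Part 1
    intro n
    apply letters_pack a b n (gword a b n) _ _ _ hab hainvb haa
    · rw [gword_length]; exact n_le_L n
    · intro i hi; exact gword_getElem? a b n i hi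
    · intro i hi
      have hnone : (gword a b n)[i]? = none :=
        List.getElem?_eq_none (by rw [gword_length]; exact hi)
      rw [hnone]
      exact ⟨by simp, by simp⟩
  · -- Part 2
    intro N
    set n := N + 1 with hn
    have hget : ∀ (i : ℕ) (hi : i < (gword a b n).length),
        (gword a b n).get ⟨i, hi⟩ = gletter a b i := by
      intro i hi
      have h1 : (gword a b n)[i]? = some (gletter a b i) :=
        gword_getElem? a b n i (by rw [← gword_length a b n]; exact hi)
      rw [List.getElem?_eq_getElem hi] at h1
      rw [List.get_eq_getElem]
      exact Option.some.inj h1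
    have hodda : ∀ (i : ℕ) (hi : i < (gword a b n).length), i % 2 = 1 →
        (gword a b n).get ⟨i, hi⟩ =
          a ^ (if (gword a b n)[i]? = some a⁻¹ then (-1 : ℤ) else 1) := by
      intro i hi ho
      have hiL : i < (n + 1) * (n + 2) := by rw [← gword_length a b n]; exact hi
      rw [hget i hi]
      by_cases hg2 : ∃ m, i = gq m
      · obtain ⟨m, rfl⟩ := hg2
        rw [gletter_of_gq]
        have hcond : ¬((gword a b n)[gq m]? = some a⁻¹) := by
          rw [gword_getElem? a b n _ hiL, gletter_of_gq]
          exact fun h => haa (Option.some.inj h)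
        rw [if_neg hcond, zpow_one]
      · have hcond : (gword a b n)[i]? = some a⁻¹ := by
          rw [gword_getElem? a b n i hiL, gletter_odd a b hg2 ho]
        rw [gletter_odd a b hg2 ho, if_pos hcond, zpow_neg_one]
    have heven : ∀ (i : ℕ) (hi : i < (gword a b n).length), i % 2 = 0 →
        (gword a b n).get ⟨i, hi⟩ = b := by
      intro i hi ho
      rw [hget i hi, gletter_even a b ho]
    have hmem : ∀ x ∈ gword a b n, x = b ∨ x = a ∨ x = a⁻¹ := by
      intro x hx
      obtain ⟨i, hi⟩ := List.mem_iff_getElem?.1 hx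
      have hilen : i < (gword a b n).length := (List.getElem?_eq_some_iff.1 hi).1
      rw [gword_getElem? a b n i (by rw [← gword_length a b n]; exact hilen)] at hi
      replace hi := Option.some.inj hi
      by_cases hg2 : ∃ m, i = gq m
      · obtain ⟨m, rfl⟩ := hg2
        rw [gletter_of_gq] at hi
        exact Or.inr (Or.inl hi.symm)
      · by_cases ho : i % 2 = 1
        · rw [gletter_odd a b hg2 ho] at hi
          exact Or.inr (Or.inr hi.symm)
        · rw [gletter_even a b (by omega)] at hi
          exact Or.inl hi.symm
    have hEv := L_even n
    have h2L := two_le_L n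
    refine ⟨(gword a b n).prod, gword a b n ++ [1],
      ⟨gword a b n,
        ⟨fun i => decide (i % 2 = 1), fun _ => 1, fun _ => 1,
          fun i => if (gword a b n)[i]? = some a⁻¹ then (-1 : ℤ) else 1,
          fun _ => one_mem H, fun _ => one_mem H,
          fun i => ?_, ?_, fun i _ => ⟨rfl, rfl⟩, ?_⟩,
        ?_, rfl, ?_⟩, ?_⟩
    · -- hθ
      split
      · exact Or.inr rfl
      · exact Or.inl rfl
    · -- hrep
      intro i hi h
      simp only [decide_eq_true_eq] at h
      rw [one_mul, mul_one]
      exact hodda i hi h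
    · -- hforced
      intro i hi hex
      obtain ⟨u', hu', v', hv', θ', hθ', heq⟩ := hex
      simp only [decide_eq_true_eq]
      by_contra hc
      have hie : i % 2 = 0 := by omega
      rw [heven i hi hie] at heq
      have haθ : a ^ θ' ∈ G₁ := by
        have hexp : a ^ θ' = u'⁻¹ * b * v'⁻¹ := by
          rw [heq]; group
        rw [hexp]
        exact mul_mem (mul_mem (inv_mem (hHle1 hu')) hbG) (inv_mem (hHle1 hv'))
      rcases hθ' with rfl | rfl
      · rw [zpow_one] at haθ; exact haG1 haθ
      · rw [zpow_neg_one] at haθ; exact hainvG1 haθ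
    · -- ReducedWord'
      refine ⟨?_, ?_, ?_, ?_⟩
      · intro x hx
        rcases hmem x hx with rfl | rfl | rfl
        · exact Or.inl hbG
        · exact Or.inr haG
        · exact Or.inr (inv_mem haG)
      · refine List.isChain_iff_getElem.mpr ?_
        intro i hilt
        have h1 : i < (gword a b n).length := by omega
        have h2 : i + 1 < (gword a b n).length := by omega
        show InDiffFactors G₁ G₂ ((gword a b n).get ⟨i, h1⟩) ((gword a b n).get ⟨i + 1, h2⟩)
        rw [hget i h1, hget (i + 1) h2]
        by_cases ho : i % 2 = 1
        · rw [gletter_even a b (show (i + 1) % 2 = 0 by omega)]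
          have hx : gletter a b i = a ∨ gletter a b i = a⁻¹ := by
            by_cases hg2 : ∃ m, i = gq m
            · obtain ⟨m, rfl⟩ := hg2
              exact Or.inl (gletter_of_gq a b m)
            · exact Or.inr (gletter_odd a b hg2 ho)
          constructor
          · rintro ⟨h1', h2'⟩
            rcases hx with h | h <;> rw [h] at h1'
            · exact haG1 h1'
            · exact hainvG1 h1'
          · rintro ⟨h1', h2'⟩
            exact hbG2 h2'
        · rw [gletter_even a b (show i % 2 = 0 by omega)]
          have hx : gletter a b (i + 1) = a ∨ gletter a b (i + 1) = a⁻¹ := by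
            by_cases hg2 : ∃ m, i + 1 = gq m
            · obtain ⟨m, hm⟩ := hg2
              rw [hm]
              exact Or.inl (gletter_of_gq a b m)
            · exact Or.inr (gletter_odd a b hg2 (by omega))
          constructor
          · rintro ⟨h1', h2'⟩
            rcases hx with h | h <;> rw [h] at h2'
            · exact haG1 h2'
            · exact hainvG1 h2'
          · rintro ⟨h1', h2'⟩
            exact hbG2 h1'
      · intro _ x hx
        rcases hmem x hx with rfl | rfl | rfl
        · exact hbH
        · exact haH
        · exact hainvH
      · intro hlen1
        rw [gword_length] at hlen1
        exact absurd hlen1 (by omega)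
    · -- w = d.word
      rw [SpecialData.word]
      dsimp only
      have hlenL : (gword a b n).length = (n + 1) * (n + 2) := gword_length a b n
      have hc0 : ¬((gword a b n).length ≠ 0 ∧ decide ((0 : ℕ) % 2 = 1) = true) := by
        simp
      have hclast : (gword a b n).length ≠ 0 ∧
          decide (((gword a b n).length - 1) % 2 = 1) = true := by
        constructor
        · omega
        · simp only [decide_eq_true_eq]
          omega
      rw [if_neg hc0, if_pos hclast]
      have hmid : (List.ofFn fun i : Fin (gword a b n).length =>
          if decide ((i : ℕ) % 2 = 1) = true then
            a ^ (if (gword a b n)[(i : ℕ)]? = some a⁻¹ then (-1 : ℤ) else 1)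
          else (if (i : ℕ) = 0 then 1 else (1 : G)) * (gword a b n).get i *
            (if (i : ℕ) + 1 < (gword a b n).length then 1 else 1)) = gword a b n := by
        have hfn : ∀ i : Fin (gword a b n).length,
            (if decide ((i : ℕ) % 2 = 1) = true then
              a ^ (if (gword a b n)[(i : ℕ)]? = some a⁻¹ then (-1 : ℤ) else 1)
            else (if (i : ℕ) = 0 then 1 else (1 : G)) * (gword a b n).get i *
              (if (i : ℕ) + 1 < (gword a b n).length then 1 else 1)) =
            (gword a b n).get i := by
          intro i
          by_cases ho : (i : ℕ) % 2 = 1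
          · rw [if_pos (by simpa using ho)]
            exact (hodda i i.isLt ho).symm
          · rw [if_neg (by simpa using ho)]
            simp
        calc _ = List.ofFn (gword a b n).get := by
              congr 1
              funext i
              exact hfn i
          _ = gword a b n := List.ofFn_get _
        
      rw [hmid]
      simp
    · -- N ≤ segf
      have hseg : n - 1 ≤ segf a (gword a b n ++ [1]) := by
        apply letters_pack a b n _ _ _ _ hab hainvb haa
        · rw [List.length_append, gword_length]
          simp only [List.length_cons, List.length_nil]
          have := n_le_L n
          omega
        · intro i hi
          rw [List.getElem?_append_left (by rw [gword_length]; exact hi)]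
          exact gword_getElem? a b n i hi
        · intro i hi
          rw [List.getElem?_append_right (by rw [gword_length]; exact hi), gword_length]
          by_cases he : i = (n + 1) * (n + 2)
          · rw [show i - (n + 1) * (n + 2) = 0 from by omega]
            refine ⟨?_, ?_⟩
            · intro h
              exact ha1 (Option.some.inj h).symm
            · intro h
              exact hainv1 (Option.some.inj h).symm
          · rw [List.getElem?_eq_none (by
              simp only [List.length_cons, List.length_nil]
              omega)]
            exact ⟨by simp, by simp⟩
      omega
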